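/- Let k, ℓ, r be positive integers with r ≤ ℓ ≤ k, let q = ⌈k/ℓ⌉, let π be a uniformly random permutation of {1,…,k}, and let R = min{π(1),…,π(q)}. Then Pr(R > r) < e^{−r/ℓ}. -/

import Mathlib

open scoped Classical

/-- For a permutation `π` of `{1,…,k}` (modelled as `Equiv.Perm (Fin k)` with values
`(π j).val + 1 ∈ {1,…,k}`), `minOfFirst k q π` is `R = min {π(1),…,π(q)}`. -/
noncomputable def minOfFirst (k q : ℕ) (π : Equiv.Perm (Fin k)) : ℕ :=
  sInf {v : ℕ | ∃ j : Fin k, (j : ℕ) < q ∧ v = (π j : ℕ) + 1}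

open Finset

/-- Any two embeddings of a type into a fintype differ by a permutation. -/
lemma exists_perm_comp_eq {α β : Type*} [Fintype α] [Fintype β] [DecidableEq β] (f g : α ↪ β) :
    ∃ σ : Equiv.Perm β, ∀ a, σ (f a) = g a := by
  classical
  refine ⟨Equiv.extendSubtype (f.toEquivRange.symm.trans g.toEquivRange), fun a => ?_⟩
  rw [Equiv.extendSubtype_apply_of_mem _ _ (Set.mem_range_self a)]
  simp [Function.Embedding.toEquivRange_symm_apply_self,
    Function.Embedding.toEquivRange_apply]

/-- All fibers of the restriction map `Perm (Fin k) → (Fin q ↪ Fin k)` have the same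
cardinality. -/
lemma fiber_card_const {k q : ℕ} (h : q ≤ k) (f : Fin q ↪ Fin k) :
    (Finset.univ.filter fun π : Equiv.Perm (Fin k) =>
        (Fin.castLEEmb h).trans π.toEmbedding = f).card
      = (Finset.univ.filter fun π : Equiv.Perm (Fin k) =>
        (Fin.castLEEmb h).trans π.toEmbedding = Fin.castLEEmb h).card := by
  classical
  obtain ⟨σ, hσ⟩ := exists_perm_comp_eq (Fin.castLEEmb h) f
  refine Finset.card_bij' (fun π _ => σ⁻¹ * π) (fun π _ => σ * π) ?_ ?_ ?_ ?_
  · intro π hπ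
    simp only [mem_filter, mem_univ, true_and] at hπ ⊢
    ext j
    have hj : π (Fin.castLE h j) = f j := by
      have := DFunLike.congr_fun hπ j
      simpa using this
    simp only [Function.Embedding.trans_apply, Fin.castLEEmb_apply,
      Equiv.toEmbedding_apply, Equiv.Perm.mul_apply, hj]
    have h2 : σ⁻¹ (f j) = Fin.castLE h j := by
      rw [← hσ j]; simp
    exact congrArg Fin.val h2
  · intro π hπ
    simp only [mem_filter, mem_univ, true_and] at hπ ⊢
    ext j
    have hj : π (Fin.castLE h j) = Fin.castLE h j := by
      have := DFunLike.congr_fun hπ j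
      simpa using this
    simp only [Function.Embedding.trans_apply, Fin.castLEEmb_apply,
      Equiv.toEmbedding_apply, Equiv.Perm.mul_apply, hj]
    exact congrArg Fin.val (hσ j)
  · intro π _; simp [mul_assoc, ← mul_assoc]
  · intro π _; simp [mul_assoc, ← mul_assoc]

/-- Characterization of `r < minOfFirst`. -/
lemma minOfFirst_gt_iff {k q r : ℕ} (hq : 0 < q) (hqk : q ≤ k)
    (π : Equiv.Perm (Fin k)) :
    r < minOfFirst k q π ↔ ∀ j : Fin q, r ≤ ((π (Fin.castLE hqk j) : Fin k) : ℕ) := by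
  have hk : 0 < k := lt_of_lt_of_le hq hqk
  have hne : {v : ℕ | ∃ j : Fin k, (j : ℕ) < q ∧ v = (π j : ℕ) + 1}.Nonempty :=
    ⟨(π ⟨0, hk⟩ : Fin k) + 1, ⟨0, hk⟩, by simpa using hq, rfl⟩
  constructor
  · intro h j
    have hmem : ((π (Fin.castLE hqk j) : Fin k) : ℕ) + 1 ∈
        {v : ℕ | ∃ j : Fin k, (j : ℕ) < q ∧ v = (π j : ℕ) + 1} :=
      ⟨Fin.castLE hqk j, by simpa using j.2, rfl⟩
    have := Nat.sInf_le hmem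
    unfold minOfFirst at h
    omega
  · intro h
    unfold minOfFirst
    obtain ⟨j, hjq, hv⟩ := Nat.sInf_mem hne
    rw [hv]
    have : Fin.castLE hqk ⟨(j : ℕ), hjq⟩ = j := by ext; rfl
    have := h ⟨(j : ℕ), hjq⟩
    rw [‹Fin.castLE hqk ⟨(j : ℕ), hjq⟩ = j›] at this
    omega

/-- The cardinality of the subtype of `Fin k` of elements `≥ r`. -/
lemma card_subtype_ge {k r : ℕ} (hrk : r ≤ k) :
    Fintype.card {x : Fin k // r ≤ (x : ℕ)} = k - r := by
  have e : {x : Fin k // r ≤ (x : ℕ)} ≃ Fin (k - r) :=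
    { toFun := fun x => ⟨(x : Fin k) - r, by
        have := (x.1).isLt; have := x.2; omega⟩
      invFun := fun y => ⟨⟨(y : ℕ) + r, by have := y.isLt; omega⟩, by simp⟩
      left_inv := fun x => by
        have := x.2
        apply Subtype.ext; apply Fin.ext; simp; omega
      right_inv := fun y => by apply Fin.ext; simp }
  rw [Fintype.card_congr e, Fintype.card_fin]

/-- Bound on the number of "good" embeddings (all values `≥ r`). -/
lemma good_card_le {k q r : ℕ} (hrk : r ≤ k) :
    ((Finset.univ : Finset (Fin q ↪ Fin k)).filter
        fun f => ∀ j, r ≤ ((f j : Fin k) : ℕ)).card ≤ (k - r).descFactorial q := by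
  classical
  rw [← Fintype.card_subtype]
  calc Fintype.card {f : Fin q ↪ Fin k // ∀ j, r ≤ ((f j : Fin k) : ℕ)}
      ≤ Fintype.card (Fin q ↪ {x : Fin k // r ≤ (x : ℕ)}) := by
        apply Fintype.card_le_of_injective
          (fun f => (⟨fun j => ⟨f.1 j, f.2 j⟩,
            fun a b hab => f.1.injective (congrArg Subtype.val hab)⟩ :
              Fin q ↪ {x : Fin k // r ≤ (x : ℕ)}))
        intro f g hfg
        apply Subtype.ext
        apply DFunLike.ext
        intro j
        have h1 := DFunLike.congr_fun hfg j
        exact congrArg Subtype.val h1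
    _ = (k - r).descFactorial q := by
        rw [Fintype.card_embedding_eq, card_subtype_ge hrk, Fintype.card_fin]

/-- Per-factor inequality in ℕ. -/
lemma factor_nat_ineq {k r i : ℕ} : (k - r - i) * k ≤ (k - i) * (k - r) := by
  rcases le_or_gt (r + i) k with hle | hlt
  · set a := k - r - i with ha
    have h1 : k - i = a + r := by omega
    have h2 : k - r = a + i := by omega
    have h3 : k = a + r + i := by omega
    calc a * k = a * a + a * r + a * i := by rw [h3]; ring
      _ ≤ a * a + a * r + a * i + r * i := Nat.le_add_right _ _
      _ = (a + r) * (a + i) := by ring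
      _ = (k - i) * (k - r) := by rw [h1, h2]
  · have : k - r - i = 0 := by omega
    simp [this]

/-- Per-factor inequality in ℝ. -/
lemma factor_real_ineq {k r i : ℕ} (hrk : r ≤ k) (hik : i < k) :
    ((k - r - i : ℕ) : ℝ) ≤ ((k - i : ℕ) : ℝ) * (1 - (r : ℝ) / k) := by
  have hk : (0 : ℝ) < k := by exact_mod_cast Nat.pos_of_ne_zero (by omega)
  have h1 : (1 : ℝ) - (r : ℝ) / k = ((k - r : ℕ) : ℝ) / k := by
    rw [Nat.cast_sub hrk]; field_simp
  rw [h1, mul_div_assoc', le_div_iff₀ hk]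
  exact_mod_cast factor_nat_ineq (k := k) (r := r) (i := i)

/-- For positive integers `r ≤ ℓ ≤ k`, `q = ⌈k/ℓ⌉`, a uniformly random permutation
`π` of `{1,…,k}` and `R = min{π(1),…,π(q)}`, we have `Pr(R > r) < e^(−r/ℓ)`. -/
theorem prob_min_gt_lt_exp (k ℓ r : ℕ) (hr : 0 < r) (hrl : r ≤ ℓ) (hlk : ℓ ≤ k) :
    (((Finset.univ : Finset (Equiv.Perm (Fin k))).filter (fun π =>
        r < minOfFirst k ⌈(k : ℝ) / (ℓ : ℝ)⌉₊ π)).card : ℝ) / (Nat.factorial k : ℝ)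
      < Real.exp (-(r : ℝ) / (ℓ : ℝ)) := by
  classical
  have hl : 0 < ℓ := lt_of_lt_of_le hr hrl
  have hk : 0 < k := lt_of_lt_of_le hl hlk
  have hrk : r ≤ k := hrl.trans hlk
  have hkR : (0 : ℝ) < k := by exact_mod_cast hk
  have hlR : (0 : ℝ) < ℓ := by exact_mod_cast hl
  set q : ℕ := ⌈(k : ℝ) / (ℓ : ℝ)⌉₊ with hqdef
  have hq : 0 < q := Nat.ceil_pos.mpr (div_pos hkR hlR)
  have hqk : q ≤ k := Nat.ceil_le.mpr
    (div_le_self hkR.le (by exact_mod_cast hl))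
  have hkql : (k : ℝ) ≤ (q : ℝ) * ℓ := by
    have := Nat.le_ceil ((k : ℝ) / ℓ)
    rw [div_le_iff₀ hlR] at this
    exact this
  -- counting setup
  set res : Equiv.Perm (Fin k) → (Fin q ↪ Fin k) :=
    fun π => (Fin.castLEEmb hqk).trans π.toEmbedding with hres
  set c : ℕ := (Finset.univ.filter fun π : Equiv.Perm (Fin k) =>
      res π = Fin.castLEEmb hqk).card with hc
  have hfiber : ∀ f : Fin q ↪ Fin k,
      (Finset.univ.filter fun π : Equiv.Perm (Fin k) => res π = f).card = c :=
    fun f => fiber_card_const hqk f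
  -- total count
  have htot : k.factorial = k.descFactorial q * c := by
    have h1 : (Finset.univ : Finset (Equiv.Perm (Fin k))).card =
        ∑ f ∈ (Finset.univ : Finset (Fin q ↪ Fin k)),
          (Finset.univ.filter fun π => res π = f).card :=
      Finset.card_eq_sum_card_fiberwise (fun x _ => Finset.mem_univ _)
    rw [Finset.card_univ, Fintype.card_perm, Fintype.card_fin] at h1
    rw [h1]
    rw [Finset.sum_congr rfl (fun f _ => hfiber f), Finset.sum_const,
      Finset.card_univ, Fintype.card_embedding_eq, Fintype.card_fin,
      Fintype.card_fin, smul_eq_mul]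
  -- good set count
  set S : Finset (Equiv.Perm (Fin k)) := Finset.univ.filter (fun π =>
      r < minOfFirst k q π) with hSdef
  set good : Finset (Fin q ↪ Fin k) :=
    Finset.univ.filter (fun f => ∀ j, r ≤ ((f j : Fin k) : ℕ)) with hgood
  have hmemS : ∀ π : Equiv.Perm (Fin k), π ∈ S ↔ ∀ j : Fin q,
      r ≤ ((π (Fin.castLE hqk j) : Fin k) : ℕ) := by
    intro π
    rw [hSdef, Finset.mem_filter]
    simp only [Finset.mem_univ, true_and]
    exact minOfFirst_gt_iff hq hqk π
  have hresapp : ∀ (π : Equiv.Perm (Fin k)) (j : Fin q),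
      res π j = π (Fin.castLE hqk j) := fun π j => rfl
  have hScount : S.card = good.card * c := by
    have h1 : S.card = ∑ f ∈ good, (S.filter fun π => res π = f).card := by
      apply Finset.card_eq_sum_card_fiberwise
      intro π hπ
      simp only [Finset.mem_coe, hgood, Finset.mem_filter]
      refine ⟨Finset.mem_univ _, fun j => ?_⟩
      rw [hresapp]
      exact (hmemS π).mp hπ j
    rw [h1]
    rw [Finset.sum_congr rfl (fun f hf => ?_), Finset.sum_const, smul_eq_mul]
    have h2 : S.filter (fun π => res π = f) =
        Finset.univ.filter (fun π => res π = f) := by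
      ext π
      simp only [Finset.mem_filter, Finset.mem_univ, true_and]
      constructor
      · rintro ⟨-, h⟩; exact h
      · intro h
        refine ⟨(hmemS π).mpr fun j => ?_, h⟩
        rw [← hresapp, h]
        rw [hgood, Finset.mem_filter] at hf
        exact hf.2 j
    rw [h2]
    exact hfiber f
  have hcpos : 0 < c := by
    rcases Nat.eq_zero_or_pos c with h | h
    · exfalso
      have := k.factorial_pos
      rw [htot, h, mul_zero] at this
      omega
    · exact h
  have hEpos : 0 < k.descFactorial q := Nat.pos_of_ne_zero (by
    rw [Ne, Nat.descFactorial_eq_zero_iff_lt]; omega)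
  -- rewrite the probability
  have hprob : ((S.card : ℝ)) / (k.factorial : ℝ) =
      (good.card : ℝ) / (k.descFactorial q : ℝ) := by
    rw [hScount, htot]
    push_cast
    rw [mul_div_mul_right _ _ (by exact_mod_cast hcpos.ne' : (c : ℝ) ≠ 0)]
  show ((S.card : ℝ)) / (k.factorial : ℝ) < Real.exp (-(r : ℝ) / ℓ)
  rw [hprob]
  -- the analytic chain
  have hG : (good.card : ℝ) ≤ ((k - r).descFactorial q : ℝ) := by
    exact_mod_cast good_card_le (q := q) hrk
  have hbase0 : (0 : ℝ) ≤ 1 - (r : ℝ) / k := by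
    rw [sub_nonneg, div_le_one hkR]
    exact_mod_cast hrk
  have hD : ((k - r).descFactorial q : ℝ) ≤
      (k.descFactorial q : ℝ) * (1 - (r : ℝ) / k) ^ q := by
    rw [Nat.descFactorial_eq_prod_range, Nat.descFactorial_eq_prod_range]
    push_cast
    calc (∏ i ∈ Finset.range q, ((k - r - i : ℕ) : ℝ))
        ≤ ∏ i ∈ Finset.range q, (((k - i : ℕ) : ℝ) * (1 - (r : ℝ) / k)) := by
          apply Finset.prod_le_prod
          · intro i _; positivity
          · intro i hi
            exact factor_real_ineq hrk (lt_of_lt_of_le (Finset.mem_range.mp hi) hqk)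
      _ = (∏ i ∈ Finset.range q, ((k - i : ℕ) : ℝ)) * (1 - (r : ℝ) / k) ^ q := by
          rw [Finset.prod_mul_distrib, Finset.prod_const, Finset.card_range]
  have hEposR : (0 : ℝ) < (k.descFactorial q : ℝ) := by exact_mod_cast hEpos
  have step1 : (good.card : ℝ) / (k.descFactorial q : ℝ) ≤
      (1 - (r : ℝ) / k) ^ q := by
    rw [div_le_iff₀ hEposR]
    calc (good.card : ℝ) ≤ ((k - r).descFactorial q : ℝ) := hG
      _ ≤ (k.descFactorial q : ℝ) * (1 - (r : ℝ) / k) ^ q := hD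
      _ = (1 - (r : ℝ) / k) ^ q * (k.descFactorial q : ℝ) := mul_comm _ _
  have hbaselt : 1 - (r : ℝ) / k < Real.exp (-((r : ℝ) / k)) := by
    have hne : -((r : ℝ) / k) ≠ 0 := by
      have : (0 : ℝ) < (r : ℝ) / k := div_pos (by exact_mod_cast hr) hkR
      linarith
    have := Real.add_one_lt_exp hne
    linarith
  have step2 : (1 - (r : ℝ) / k) ^ q < Real.exp (-((r : ℝ) / k)) ^ q :=
    pow_lt_pow_left₀ hbaselt hbase0 hq.ne'
  have step3 : Real.exp (-((r : ℝ) / k)) ^ q = Real.exp ((q : ℝ) * -((r : ℝ) / k)) :=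
    (Real.exp_nat_mul _ q).symm
  have step4 : Real.exp ((q : ℝ) * -((r : ℝ) / k)) ≤ Real.exp (-(r : ℝ) / ℓ) := by
    rw [Real.exp_le_exp]
    rw [neg_div, mul_neg, neg_le_neg_iff, mul_div_assoc', div_le_div_iff₀ hlR hkR]
    nlinarith [hkql, (by exact_mod_cast hr : (0 : ℝ) < r)]
  calc (good.card : ℝ) / (k.descFactorial q : ℝ)
      ≤ (1 - (r : ℝ) / k) ^ q := step1
    _ < Real.exp (-((r : ℝ) / k)) ^ q := step2
    _ = Real.exp ((q : ℝ) * -((r : ℝ) / k)) := step3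
    _ ≤ Real.exp (-(r : ℝ) / ℓ) := step4
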